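/- Λ(Y|X) = 1 if and only if Y is completely separated relative to X, that is, if and only if Ψ(κ(x₁), κ(x₂)) ∈ {0, 1} for (μ_X ⊗ μ_X)-almost all (x₁, x₂) with x₁ ≠ x₂. -/

import Mathlib

open MeasureTheory ProbabilityTheory Set Filter Topology

/-- The (nonparametric) relative effect `Ψ(μ, ν) = ∫ μ((-∞,y)) + (1/2) μ({y}) dν(y)`. -/
noncomputable def relEffect (μ ν : Measure ℝ) : ℝ :=
  ∫ y, ((μ (Set.Iio y)).toReal + (1 / 2) * (μ {y}).toReal) ∂ν

/-- `α(μ) = 1 - ∫ μ({x}) dμ(x) = 1 - P(X = X*)`, the non-discrete mass of `μ`. -/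
noncomputable def alphaCoeff {E : Type*} [MeasurableSpace E] (μ : Measure E) : ℝ :=
  1 - ∫ x, (μ {x}).toReal ∂μ

/-- The coefficient of separation `Λ(Y|X)`. -/
noncomputable def sepCoeff {Ω E : Type*} [MeasurableSpace Ω] [MeasurableSpace E]
    (P : Measure Ω) [IsFiniteMeasure P] (Y : Ω → ℝ) (X : Ω → E) : ℝ :=
  (alphaCoeff (P.map X))⁻¹ *
    ∫ x : E × E,
      (relEffect (condDistrib Y X P x.1) (condDistrib Y X P x.2)
        - relEffect (condDistrib Y X P x.2) (condDistrib Y X P x.1)) ^ 2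
      ∂((P.map X).prod (P.map X))

/-- A random variable is non-degenerate if it is not a.s. constant. -/
def Nondegenerate {Ω α : Type*} [MeasurableSpace Ω] (P : Measure Ω) (Z : Ω → α) : Prop :=
  ¬ ∃ c, ∀ᵐ ω ∂P, Z ω = c

/-- `Y` is completely separated relative to `X`. -/
def CompletelySeparated {Ω E : Type*} [MeasurableSpace Ω] [MeasurableSpace E]
    (P : Measure Ω) [IsFiniteMeasure P] (Y : Ω → ℝ) (X : Ω → E) : Prop :=
  ∀ᵐ x : E × E ∂((P.map X).prod (P.map X)), x.1 ≠ x.2 →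
    relEffect (condDistrib Y X P x.1) (condDistrib Y X P x.2) = 0 ∨
    relEffect (condDistrib Y X P x.1) (condDistrib Y X P x.2) = 1

open scoped ENNReal

noncomputable def psiE (μ ν : Measure ℝ) : ℝ≥0∞ :=
  ∫⁻ y, (μ (Set.Iio y) + (1/2) * μ {y}) ∂ν

lemma measurable_psi_integrand (μ : Measure ℝ) [SFinite μ] :
    Measurable fun y => μ (Set.Iio y) + (1/2) * μ {y} := by
  have h1 : (fun y => μ (Set.Iio y)) =
      fun y => μ (Prod.mk y ⁻¹' {q : ℝ × ℝ | q.2 < q.1}) := by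
    rfl
  have h2 : (fun y => μ ({y} : Set ℝ)) =
      fun y => μ (Prod.mk y ⁻¹' {q : ℝ × ℝ | q.2 = q.1}) := by
    rfl
  refine Measurable.add ?_ (Measurable.const_mul ?_ _)
  · rw [h1]
    exact measurable_measure_prodMk_left (measurableSet_lt measurable_snd measurable_fst)
  · rw [h2]
    exact measurable_measure_prodMk_left (measurableSet_eq_fun measurable_snd measurable_fst)

lemma psiE_le_one (μ ν : Measure ℝ) [IsProbabilityMeasure μ] [IsProbabilityMeasure ν] :
    psiE μ ν ≤ 1 := by
  calc psiE μ ν ≤ ∫⁻ _, 1 ∂ν := by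
        refine lintegral_mono fun y => ?_
        have h1 : μ (Set.Iio y) + (1/2) * μ {y} ≤ μ (Set.Iio y) + μ {y} := by
          gcongr
          calc (1/2) * μ {y} ≤ 1 * μ {y} := by gcongr; norm_num
          _ = μ {y} := one_mul _
        refine h1.trans ?_
        rw [← measure_union (by simp) (measurableSet_singleton y)]
        exact (measure_mono (subset_univ _)).trans (by simp)
    _ = 1 := by simp

lemma relEffect_eq_toReal (μ ν : Measure ℝ) [IsFiniteMeasure μ] :
    relEffect μ ν = (psiE μ ν).toReal := by
  rw [relEffect, psiE, ← integral_toReal]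
  · refine integral_congr_ae (Eventually.of_forall fun y => ?_)
    show (μ (Set.Iio y)).toReal + 1/2 * (μ {y}).toReal = (μ (Set.Iio y) + 1/2 * μ {y}).toReal
    rw [ENNReal.toReal_add (measure_ne_top _ _)
      (ENNReal.mul_ne_top (by norm_num) (measure_ne_top _ _)), ENNReal.toReal_mul]
    norm_num
  · exact (measurable_psi_integrand μ).aemeasurable
  · exact Eventually.of_forall fun y =>
      ENNReal.add_lt_top.2 ⟨measure_lt_top _ _, ENNReal.mul_lt_top (by norm_num) (measure_lt_top _ _)⟩

noncomputable def hFun (x y : ℝ) : ℝ≥0∞ :=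
  (Set.Iio y).indicator 1 x + (1/2) * ({y} : Set ℝ).indicator 1 x

lemma hFun_meas : Measurable (Function.uncurry hFun) := by
  unfold Function.uncurry hFun
  refine Measurable.add ?_ (Measurable.const_mul ?_ _)
  · have : (fun p : ℝ × ℝ => (Set.Iio p.2).indicator (1 : ℝ → ℝ≥0∞) p.1) =
        {p : ℝ × ℝ | p.1 < p.2}.indicator 1 := by
      funext p
      by_cases h : p.1 < p.2 <;> simp [Set.indicator, h]
    rw [this]
    exact measurable_one.indicator (measurableSet_lt measurable_fst measurable_snd)
  · have : (fun p : ℝ × ℝ => ({p.2} : Set ℝ).indicator (1 : ℝ → ℝ≥0∞) p.1) =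
        {p : ℝ × ℝ | p.1 = p.2}.indicator 1 := by
      funext p
      by_cases h : p.1 = p.2 <;> simp [Set.indicator, h]
    rw [this]
    exact measurable_one.indicator (measurableSet_eq_fun measurable_fst measurable_snd)

lemma hFun_add (x y : ℝ) : hFun x y + hFun y x = 1 := by
  unfold hFun
  rcases lt_trichotomy x y with h | h | h
  · simp [Set.indicator, h, not_lt.2 h.le, h.ne, h.ne']
  · subst h
    have e1 : ({x} : Set ℝ).indicator (1 : ℝ → ℝ≥0∞) x = 1 := by simp
    have e2 : (Set.Iio x).indicator (1 : ℝ → ℝ≥0∞) x = 0 := by simp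
    rw [e1, e2]; simp; rw [ENNReal.inv_two_add_inv_two]
  · simp [Set.indicator, h, not_lt.2 h.le, h.ne, h.ne']

lemma lintegral_hFun (μ : Measure ℝ) (y : ℝ) :
    ∫⁻ x, hFun x y ∂μ = μ (Set.Iio y) + (1/2) * μ {y} := by
  unfold hFun
  rw [lintegral_add_left (measurable_one.indicator measurableSet_Iio),
    lintegral_const_mul _ (measurable_one.indicator (measurableSet_singleton y)),
    lintegral_indicator_one measurableSet_Iio,
    lintegral_indicator_one (measurableSet_singleton y)]

lemma psiE_add_psiE (μ ν : Measure ℝ) [IsProbabilityMeasure μ] [IsProbabilityMeasure ν] :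
    psiE μ ν + psiE ν μ = 1 := by
  have h1 : psiE μ ν = ∫⁻ y, ∫⁻ x, hFun x y ∂μ ∂ν := by
    unfold psiE; exact (lintegral_congr fun y => (lintegral_hFun μ y).symm)
  have h2 : psiE ν μ = ∫⁻ x, ∫⁻ y, hFun y x ∂ν ∂μ := by
    unfold psiE; exact (lintegral_congr fun x => (lintegral_hFun ν x).symm)
  have hswap : ∫⁻ x, ∫⁻ y, hFun y x ∂ν ∂μ = ∫⁻ y, ∫⁻ x, hFun y x ∂μ ∂ν := by
    exact lintegral_lintegral_swap
      ((hFun_meas.comp measurable_swap).aemeasurable)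
  rw [h1, h2, hswap, ← lintegral_add_left]
  · rw [show (fun y => (∫⁻ x, hFun x y ∂μ) + ∫⁻ x, hFun y x ∂μ) =
        fun y => ∫⁻ x, (hFun x y + hFun y x) ∂μ from ?_]
    · simp [hFun_add]
    · funext y
      rw [← lintegral_add_left]
      exact (hFun_meas.comp (measurable_id.prodMk measurable_const))
  · exact Measurable.lintegral_prod_right (f := fun y x => hFun x y)
      (hFun_meas.comp measurable_swap)

lemma measurable_psiE_kernel {E : Type*} [MeasurableSpace E] (κ : Kernel E ℝ)
    [IsSFiniteKernel κ] :
    Measurable fun x : E × E => psiE (κ x.1) (κ x.2) := by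
  have hG : Measurable fun q : E × ℝ => κ q.1 (Set.Iio q.2) + (1/2) * κ q.1 {q.2} := by
    refine Measurable.add ?_ (Measurable.const_mul ?_ _)
    · have := Kernel.measurable_kernel_prodMk_left
        (κ := κ.comap (Prod.fst : E × ℝ → E) measurable_fst)
        (t := {q : (E × ℝ) × ℝ | q.2 < q.1.2})
        (measurableSet_lt measurable_snd (measurable_snd.comp measurable_fst))
      simpa [Kernel.comap_apply, Set.Iio] using this
    · have := Kernel.measurable_kernel_prodMk_left
        (κ := κ.comap (Prod.fst : E × ℝ → E) measurable_fst)
        (t := {q : (E × ℝ) × ℝ | q.2 = q.1.2})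
        (measurableSet_eq_fun measurable_snd (measurable_snd.comp measurable_fst))
      simpa [Kernel.comap_apply] using this
  have hmain := Measurable.lintegral_kernel_prod_right'
    (κ := κ.comap (Prod.snd : E × E → E) measurable_snd)
    (f := fun p : (E × E) × ℝ => κ p.1.1 (Set.Iio p.2) + (1/2) * κ p.1.1 {p.2})
    (hG.comp ((measurable_fst.comp measurable_fst).prodMk measurable_snd))
  simpa [Kernel.comap_apply, psiE] using hmain

lemma lintegral_singleton_eq_prod {E : Type*} [MeasurableSpace E] (μ : Measure E) [SFinite μ]
    (hd : MeasurableSet {x : E × E | x.1 = x.2}) :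
    ∫⁻ x, μ {x} ∂μ = (μ.prod μ) {x : E × E | x.1 = x.2} := by
  rw [Measure.prod_apply hd]
  refine lintegral_congr fun x => ?_
  congr 1
  ext z
  simp [eq_comm]

/-- `Λ(Y|X) = 1` iff `Y` is completely separated relative to `X`. -/
theorem sepCoeff_eq_one_iff_completelySeparated
    {Ω : Type*} [MeasurableSpace Ω] {p : ℕ} (hp : 1 ≤ p)
    (P : Measure Ω) [IsProbabilityMeasure P]
    (X : Ω → (Fin p → ℝ)) (Y : Ω → ℝ)
    (hX : Measurable X) (hY : Measurable Y)
    (hXnd : ∃ k, Nondegenerate P fun ω => X ω k)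
    (hYnd : Nondegenerate P Y) :
    sepCoeff P Y X = 1 ↔ CompletelySeparated P Y X := by
  classical
  set κ : Kernel (Fin p → ℝ) ℝ := condDistrib Y X P with hκ
  set μ : Measure (Fin p → ℝ) := P.map X with hμ
  haveI hμP : IsProbabilityMeasure μ := Measure.isProbabilityMeasure_map hX.aemeasurable
  have hprob : ∀ x, IsProbabilityMeasure (κ x) := fun x => inferInstance
  set f : (Fin p → ℝ) × (Fin p → ℝ) → ℝ := fun x => relEffect (κ x.1) (κ x.2) with hf
  have hre : ∀ x : (Fin p → ℝ) × (Fin p → ℝ), f x = (psiE (κ x.1) (κ x.2)).toReal := by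
    intro x
    haveI := hprob x.1
    exact relEffect_eq_toReal (κ x.1) (κ x.2)
  have hfm : Measurable f := by
    have : f = fun x => (psiE (κ x.1) (κ x.2)).toReal := funext hre
    rw [this]
    exact (measurable_psiE_kernel κ).ennreal_toReal
  have hf0 : ∀ x, 0 ≤ f x := fun x => by rw [hre x]; exact ENNReal.toReal_nonneg
  have hf1 : ∀ x, f x ≤ 1 := by
    intro x
    rw [hre x]
    haveI := hprob x.1; haveI := hprob x.2
    calc (psiE (κ x.1) (κ x.2)).toReal ≤ (1 : ℝ≥0∞).toReal :=
          ENNReal.toReal_mono (by simp) (psiE_le_one _ _)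
      _ = 1 := by simp
  have hsym : ∀ x : (Fin p → ℝ) × (Fin p → ℝ),
      relEffect (κ x.2) (κ x.1) = 1 - f x := by
    intro x
    haveI := hprob x.1; haveI := hprob x.2
    have hadd := psiE_add_psiE (κ x.1) (κ x.2)
    have h1 : f x + relEffect (κ x.2) (κ x.1) = 1 := by
      rw [hre x, relEffect_eq_toReal (κ x.2) (κ x.1),
        ← ENNReal.toReal_add (ne_top_of_le_ne_top ENNReal.one_ne_top (psiE_le_one _ _))
          (ne_top_of_le_ne_top ENNReal.one_ne_top (psiE_le_one _ _)), hadd]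
      simp
    linarith
  -- the squared difference
  set g : (Fin p → ℝ) × (Fin p → ℝ) → ℝ := fun x => (2 * f x - 1) ^ 2 with hg
  have hgeq : ∀ x : (Fin p → ℝ) × (Fin p → ℝ),
      (relEffect (κ x.1) (κ x.2) - relEffect (κ x.2) (κ x.1)) ^ 2 = g x := by
    intro x
    rw [hsym x]
    show (f x - (1 - f x)) ^ 2 = (2 * f x - 1) ^ 2
    ring
  have hgm : Measurable g := by
    apply Measurable.pow _ measurable_const
    exact ((hfm.const_mul 2).sub measurable_const)
  have hg0 : ∀ x, 0 ≤ g x := fun x => sq_nonneg _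
  have hg1 : ∀ x, g x ≤ 1 := by
    intro x
    have h0 := hf0 x; have h1 := hf1 x
    show (2 * f x - 1) ^ 2 ≤ 1
    nlinarith
  have hgint : Integrable g (μ.prod μ) := by
    refine (integrable_const (1 : ℝ)).mono' hgm.aestronglyMeasurable ?_
    exact Eventually.of_forall fun x => by
      rw [Real.norm_eq_abs, abs_of_nonneg (hg0 x)]; exact hg1 x
  set diag : Set ((Fin p → ℝ) × (Fin p → ℝ)) := {x | x.1 = x.2} with hdiag
  have hd : MeasurableSet diag := measurableSet_eq_fun measurable_fst measurable_snd
  have hmsing : Measurable fun x : Fin p → ℝ => μ {x} := by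
    have h := measurable_measure_prodMk_left (ν := μ) hd
    have he : (fun x : Fin p → ℝ => μ {x}) = fun x => μ (Prod.mk x ⁻¹' diag) := by
      funext x; congr 1; ext z; simp [hdiag, eq_comm]
    rw [he]; exact h
  have hsing_lin : ∫⁻ x, μ {x} ∂μ = (μ.prod μ) diag := lintegral_singleton_eq_prod μ hd
  have halpha : alphaCoeff μ = 1 - ((μ.prod μ) diag).toReal := by
    rw [alphaCoeff, ← hsing_lin, ← integral_toReal hmsing.aemeasurable
      (Eventually.of_forall fun x => measure_lt_top _ _)]
  have hoffd : ((μ.prod μ) diagᶜ).toReal = 1 - ((μ.prod μ) diag).toReal := by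
    rw [measure_compl hd (measure_ne_top _ _), measure_univ,
      ENNReal.toReal_sub_of_le prob_le_one ENNReal.one_ne_top]
    simp
  -- positivity of alpha
  have hαpos : 0 < alphaCoeff μ := by
    rw [halpha]
    have hle : (μ.prod μ) diag ≤ 1 := prob_le_one
    rcases lt_or_eq_of_le hle with h | h
    · have : ((μ.prod μ) diag).toReal < 1 := by
        rw [← ENNReal.toReal_one]
        exact ENNReal.toReal_strict_mono ENNReal.one_ne_top h
      linarith
    · exfalso
      have hlin1 : ∫⁻ x, μ {x} ∂μ = 1 := by rw [hsing_lin, h]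
      have hle1 : ∀ x, μ {x} ≤ 1 := fun x => prob_le_one
      have hzero : ∫⁻ x, (1 - μ {x}) ∂μ = 0 := by
        rw [lintegral_sub hmsing (by rw [hlin1]; exact ENNReal.one_ne_top)
          (Eventually.of_forall hle1), hlin1]
        simp
      have hae : ∀ᵐ x ∂μ, μ {x} = 1 := by
        have := (lintegral_eq_zero_iff (measurable_const.sub hmsing)).1 hzero
        filter_upwards [this] with x hx
        have : (1 : ℝ≥0∞) ≤ μ {x} := by
          have := tsub_eq_zero_iff_le.1 hx
          exact this
        exact le_antisymm (hle1 x) this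
      haveI : (Filter.NeBot (ae μ)) := ae_neBot.2 (IsProbabilityMeasure.ne_zero μ)
      obtain ⟨x₀, hx₀⟩ := hae.exists
      have hP1 : P (X ⁻¹' {x₀}) = 1 := by
        rw [← Measure.map_apply hX (measurableSet_singleton x₀)]
        exact hx₀
      have haeX : ∀ᵐ ω ∂P, X ω = x₀ := by
        rw [ae_iff]
        have : {ω | ¬ X ω = x₀} = (X ⁻¹' {x₀})ᶜ := by ext ω; simp
        rw [this]
        exact (prob_compl_eq_zero_iff (hX (measurableSet_singleton x₀))).2 hP1
      obtain ⟨k, hk⟩ := hXnd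
      exact hk ⟨x₀ k, haeX.mono fun ω h => by show X ω k = x₀ k; rw [h]⟩
  -- rewrite sepCoeff
  have hsep : sepCoeff P Y X = (alphaCoeff μ)⁻¹ * ∫ x, g x ∂(μ.prod μ) := by
    rw [sepCoeff]
    congr 1
    exact integral_congr_ae (Eventually.of_forall fun x => hgeq x)
  set I : ℝ := ∫ x, g x ∂(μ.prod μ) with hI
  have hind : Integrable (diagᶜ.indicator fun _ => (1 : ℝ)) (μ.prod μ) :=
    (integrable_const (1 : ℝ)).indicator hd.compl
  have hindint : ∫ x, diagᶜ.indicator (fun _ => (1 : ℝ)) x ∂(μ.prod μ)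
      = ((μ.prod μ) diagᶜ).toReal := by
    rw [integral_indicator_const (1 : ℝ) hd.compl]
    simp; rfl
  have hdiffint : ∫ x, (diagᶜ.indicator (fun _ => (1 : ℝ)) x - g x) ∂(μ.prod μ)
      = alphaCoeff μ - I := by
    rw [integral_sub hind hgint, hindint, hoffd, halpha]
  have hgzero_diag : ∀ x : (Fin p → ℝ) × (Fin p → ℝ), x.1 = x.2 → g x = 0 := by
    intro x hx
    have h1 := hsym x
    have h2 : relEffect (κ x.2) (κ x.1) = f x := by
      rw [hf]
      show relEffect (κ x.2) (κ x.1) = relEffect (κ x.1) (κ x.2)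
      rw [hx]
    rw [h2] at h1
    rw [hg]
    show (2 * f x - 1) ^ 2 = 0
    have : f x = 1 / 2 := by linarith
    rw [this]; norm_num
  have hnn : ∀ x, 0 ≤ diagᶜ.indicator (fun _ => (1 : ℝ)) x - g x := by
    intro x
    by_cases hx : x ∈ diagᶜ
    · rw [Set.indicator_of_mem hx]
      have := hg1 x; linarith
    · rw [Set.indicator_of_notMem hx]
      have hx2 : x.1 = x.2 := by simpa [hdiag] using hx
      rw [hgzero_diag x hx2]
      simp
  have hkey : (I = alphaCoeff μ) ↔
      ∀ᵐ x ∂(μ.prod μ), diagᶜ.indicator (fun _ => (1 : ℝ)) x - g x = 0 := by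
    constructor
    · intro h
      have h0 : ∫ x, (diagᶜ.indicator (fun _ => (1 : ℝ)) x - g x) ∂(μ.prod μ) = 0 := by
        rw [hdiffint]; linarith
      have h1 := (integral_eq_zero_iff_of_nonneg (fun x => hnn x) (hind.sub hgint)).1 h0
      filter_upwards [h1] with x hx
      exact hx
    · intro h
      have h0 : ∫ x, (diagᶜ.indicator (fun _ => (1 : ℝ)) x - g x) ∂(μ.prod μ) = 0 := by
        refine (integral_eq_zero_iff_of_nonneg (fun x => hnn x) (hind.sub hgint)).2 ?_
        filter_upwards [h] with x hx
        exact hx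
      rw [hdiffint] at h0
      linarith
  have hfinal : (∀ᵐ x ∂(μ.prod μ), diagᶜ.indicator (fun _ => (1 : ℝ)) x - g x = 0)
      ↔ CompletelySeparated P Y X := by
    rw [CompletelySeparated]
    apply Filter.eventually_congr
    refine Eventually.of_forall fun x => ?_
    by_cases hx : x.1 = x.2
    · have hxd : x ∉ diagᶜ := by simp [hdiag, hx]
      rw [Set.indicator_of_notMem hxd, hgzero_diag x hx]
      simp [hx]
    · have hxd : x ∈ diagᶜ := by simp [hdiag, hx]
      rw [Set.indicator_of_mem hxd]
      constructor
      · intro h _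
        have hg1' : g x = 1 := by linarith
        have : f x * (f x - 1) = 0 := by
          rw [hg] at hg1'
          have : (2 * f x - 1) ^ 2 = 1 := hg1'
          nlinarith
        rcases mul_eq_zero.1 this with h' | h'
        · left; exact h'
        · right; linarith
      · intro h
        rcases h hx with h' | h'
        · have : f x = 0 := h'
          rw [hg]
          show 1 - (2 * f x - 1) ^ 2 = 0
          rw [this]; norm_num
        · have : f x = 1 := h'
          rw [hg]
          show 1 - (2 * f x - 1) ^ 2 = 0
          rw [this]; norm_num
  rw [hsep]
  rw [inv_mul_eq_one₀ (ne_of_gt hαpos)]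
  rw [eq_comm]
  rw [hkey, hfinal]
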